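/- Let A : ℝ^n → ℝ^m be linear, 0 < τ ≤ 1/‖AᵀA‖, D : ℝ^n → ℝ^n nonexpansive, δ² > 1, D_δ = Id + (D − Id)/δ², and G(x) = x − τ·Aᵀ(Ax − y). Then T_δ = D_δ ∘ G is θ-averaged with θ = δ²/(2δ² − 1) ∈ (0,1). -/

import Mathlib

open RealInnerProductSpace

set_option maxHeartbeats 1000000 in

/-- Under the stepsize condition `0 < τ ≤ 1/‖AᵀA‖`, with `D` nonexpansive and
`δ² > 1`, the PnP-PGD operator `T_δ = D_δ ∘ G` is `δ²/(2δ² − 1)`-averaged, with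
`δ²/(2δ² − 1) ∈ (0,1)`. -/
theorem Tdelta_averaged
    (n m : ℕ) (A : EuclideanSpace ℝ (Fin n) →L[ℝ] EuclideanSpace ℝ (Fin m))
    (y : EuclideanSpace ℝ (Fin m)) (τ : ℝ)
    (hτ₀ : 0 < τ) (hτ : τ ≤ 1 / ‖(ContinuousLinearMap.adjoint A).comp A‖)
    (D : EuclideanSpace ℝ (Fin n) → EuclideanSpace ℝ (Fin n))
    (hD : LipschitzWith 1 D)
    (δ : ℝ) (hδ : 1 < δ ^ 2)
    (Dδ G Tδ : EuclideanSpace ℝ (Fin n) → EuclideanSpace ℝ (Fin n))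
    (hDδ : ∀ x, Dδ x = x + (δ ^ 2)⁻¹ • (D x - x))
    (hG : ∀ x, G x = x - τ • (ContinuousLinearMap.adjoint A) (A x - y))
    (hT : Tδ = Dδ ∘ G) :
    δ ^ 2 / (2 * δ ^ 2 - 1) ∈ Set.Ioo (0:ℝ) 1 ∧
    ∃ R : EuclideanSpace ℝ (Fin n) → EuclideanSpace ℝ (Fin n),
      LipschitzWith 1 R ∧ ∀ x,
        Tδ x = (1 - δ ^ 2 / (2 * δ ^ 2 - 1)) • x + (δ ^ 2 / (2 * δ ^ 2 - 1)) • R x := by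
  have hδ0 : (0:ℝ) < δ ^ 2 := by linarith
  set α : ℝ := (δ ^ 2)⁻¹ with hαdef
  have hα0 : 0 < α := inv_pos.mpr hδ0
  have hα1 : α < 1 := by
    rw [hαdef]
    rw [inv_lt_one_iff₀]; right; exact hδ
  have hden : (0:ℝ) < 2 * δ ^ 2 - 1 := by nlinarith
  set θ : ℝ := δ ^ 2 / (2 * δ ^ 2 - 1) with hθdef
  have hθα : θ * (2 - α) = 1 := by
    rw [hθdef, hαdef]
    have h1 : δ ≠ 0 := by rintro rfl; norm_num at hδ0
    have h2 : δ ^ 2 * 2 - 1 ≠ 0 := by linarith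
    field_simp
  refine ⟨⟨div_pos hδ0 hden, by rw [hθdef, div_lt_one hden]; linarith⟩, ?_⟩
  set S := (ContinuousLinearMap.adjoint A).comp A with hSdef
  have hSA : ∀ u : EuclideanSpace ℝ (Fin n),
      S u = ContinuousLinearMap.adjoint A (A u) := fun u => rfl
  have hSnorm : ‖S‖ = ‖A‖ * ‖A‖ := ContinuousLinearMap.norm_adjoint_comp_self A
  have hτ1 : τ * ‖S‖ ≤ 1 := by
    rcases (norm_nonneg S).lt_or_eq with h | h
    · calc τ * ‖S‖ ≤ 1 / ‖S‖ * ‖S‖ := mul_le_mul_of_nonneg_right hτ (norm_nonneg S)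
        _ = 1 := by rw [one_div, inv_mul_cancel₀ h.ne']
    · rw [← h] at hτ ⊢
      norm_num at hτ
      linarith
  have keyI : ∀ u : EuclideanSpace ℝ (Fin n), ⟪u, S u⟫ = ‖A u‖ ^ 2 := by
    intro u
    rw [hSA, ContinuousLinearMap.adjoint_inner_right, real_inner_self_eq_norm_sq]
  have key : ∀ u : EuclideanSpace ℝ (Fin n), τ * ‖S u‖ ^ 2 ≤ ‖A u‖ ^ 2 := by
    intro u
    have h1 : ‖S u‖ ≤ ‖A‖ * ‖A u‖ := by
      rw [hSA]
      calc ‖ContinuousLinearMap.adjoint A (A u)‖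
          ≤ ‖ContinuousLinearMap.adjoint A‖ * ‖A u‖ :=
            ContinuousLinearMap.le_opNorm _ _
        _ = ‖A‖ * ‖A u‖ := by
            rw [ContinuousLinearMap.adjoint.norm_map A]
    have h2 : ‖S u‖ ^ 2 ≤ (‖A‖ * ‖A u‖) ^ 2 :=
      pow_le_pow_left₀ (norm_nonneg _) h1 2
    have h3 : τ * ‖S‖ * ‖A u‖ ^ 2 ≤ 1 * ‖A u‖ ^ 2 :=
      mul_le_mul_of_nonneg_right hτ1 (sq_nonneg _)
    rw [hSnorm] at h3
    have h4 := mul_le_mul_of_nonneg_left h2 hτ₀.le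
    nlinarith [h3, h4]
  -- the main pointwise estimate
  have main : ∀ x z : EuclideanSpace ℝ (Fin n),
      ‖(x - z) + (2 - α) • ((Tδ x - Tδ z) - (x - z))‖ ≤ ‖x - z‖ := by
    intro x z
    set u : EuclideanSpace ℝ (Fin n) := x - z with hu
    set g : EuclideanSpace ℝ (Fin n) := G x - G z with hg
    set d : EuclideanSpace ℝ (Fin n) := D (G x) - D (G z) with hd
    set t : EuclideanSpace ℝ (Fin n) := Tδ x - Tδ z with ht
    have fg : g = u - τ • S u := by
      rw [hg, hG x, hG z, hu]
      have h1 : ContinuousLinearMap.adjoint A (A x - y)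
          - ContinuousLinearMap.adjoint A (A z - y) = S (x - z) := by
        rw [← map_sub, hSA]
        congr 1
        rw [map_sub]
        abel
      rw [← h1]
      module
    have ftx : ∀ w, Tδ w = G w + α • (D (G w) - G w) := by
      intro w
      rw [hT]
      exact hDδ (G w)
    have ft : t = g + α • (d - g) := by
      rw [ht, ftx x, ftx z, hg, hd]
      module
    have fd : ‖d‖ ≤ ‖g‖ := by
      have := hD.dist_le_mul (G x) (G z)
      simpa [dist_eq_norm, hd, hg] using this
    have e2 : ‖d‖ ^ 2 ≤ ‖g‖ ^ 2 := pow_le_pow_left₀ (norm_nonneg _) fd 2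
    -- firm nonexpansiveness of G differences: ‖g‖² ≤ ⟪u, g⟫
    have e1 : ‖g‖ ^ 2 ≤ ⟪u, g⟫ := by
      rw [fg]
      have h1 := norm_sub_sq_real u (τ • S u)
      have h2 : ⟪u, τ • S u⟫ = τ * ‖A u‖ ^ 2 := by
        rw [real_inner_smul_right, keyI]
      have h3 : ‖τ • S u‖ ^ 2 = τ ^ 2 * ‖S u‖ ^ 2 := by
        rw [norm_smul, mul_pow, Real.norm_eq_abs, sq_abs]
      have h4 : ⟪u, u - τ • S u⟫ = ‖u‖ ^ 2 - τ * ‖A u‖ ^ 2 := by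
        rw [inner_sub_right, h2, real_inner_self_eq_norm_sq]
      have h5 : τ * (τ * ‖S u‖ ^ 2) ≤ τ * ‖A u‖ ^ 2 :=
        mul_le_mul_of_nonneg_left (key u) hτ₀.le
      linarith [h1, h2, h3, h4, h5]
    -- averagedness inequality for the Dδ part
    have H1 : α * ‖t‖ ^ 2 ≤ α * ‖g‖ ^ 2 - (1 - α) * ‖g - t‖ ^ 2 := by
      have h1 := norm_add_sq_real g (α • (d - g))
      have h2 : ⟪g, α • (d - g)⟫ = α * ⟪g, d - g⟫ := real_inner_smul_right _ _ _
      have h3 : ‖α • (d - g)‖ ^ 2 = α ^ 2 * ‖d - g‖ ^ 2 := by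
        rw [norm_smul, mul_pow, Real.norm_eq_abs, sq_abs]
      have h4 : ‖t‖ ^ 2 = ‖g‖ ^ 2 + 2 * (α * ⟪g, d - g⟫) + α ^ 2 * ‖d - g‖ ^ 2 := by
        rw [ft, h1, h2, h3]
      have h5 : g - t = α • (g - d) := by
        rw [ft]; module
      have h6 : ‖g - t‖ ^ 2 = α ^ 2 * ‖g - d‖ ^ 2 := by
        rw [h5, norm_smul, mul_pow, Real.norm_eq_abs, sq_abs]
      have h7 : ‖g - d‖ = ‖d - g‖ := norm_sub_rev _ _
      have h8 : d = g + (d - g) := by abel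
      have h9 : ‖d‖ ^ 2 = ‖g‖ ^ 2 + 2 * ⟪g, d - g⟫ + ‖d - g‖ ^ 2 := by
        conv_lhs => rw [h8]
        exact norm_add_sq_real g (d - g)
      have h10 : 2 * ⟪g, d - g⟫ + ‖d - g‖ ^ 2 ≤ 0 := by linarith [h9, e2]
      have h11 := mul_le_mul_of_nonneg_left h10 (sq_nonneg α)
      rw [h4, h6, h7]
      nlinarith [h11]
    -- averagedness (firm nonexpansiveness) of G differences
    have H2 : ‖g‖ ^ 2 + ‖u - g‖ ^ 2 ≤ ‖u‖ ^ 2 := by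
      have h1 := norm_sub_sq_real u g
      linarith [e1, h1]
    -- convexity-type estimate
    have H3 : α * (1 - α) * ‖u - t‖ ^ 2 ≤ α * ‖u - g‖ ^ 2 + (1 - α) * ‖g - t‖ ^ 2 := by
      set a : EuclideanSpace ℝ (Fin n) := u - g with ha
      set b : EuclideanSpace ℝ (Fin n) := g - t with hb
      have hab : u - t = a + b := by rw [ha, hb]; abel
      have h1 := norm_add_sq_real a b
      have h2 : (0:ℝ) ≤ ‖α • a - (1 - α) • b‖ ^ 2 := sq_nonneg _
      have h3 : ‖α • a - (1 - α) • b‖ ^ 2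
          = α ^ 2 * ‖a‖ ^ 2 - 2 * (α * (1 - α)) * ⟪a, b⟫ + (1 - α) ^ 2 * ‖b‖ ^ 2 := by
        rw [norm_sub_sq_real, real_inner_smul_left, real_inner_smul_right,
          norm_smul, norm_smul, mul_pow, mul_pow, Real.norm_eq_abs, Real.norm_eq_abs,
          sq_abs, sq_abs]
        ring
      rw [hab, norm_add_sq_real]
      rw [h3] at h2
      nlinarith [h2]
    have H : ‖t‖ ^ 2 + (1 - α) * ‖u - t‖ ^ 2 ≤ ‖u‖ ^ 2 := by
      have hsum : α * (‖t‖ ^ 2 + (1 - α) * ‖u - t‖ ^ 2) ≤ α * ‖u‖ ^ 2 := by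
        have h12 := mul_le_mul_of_nonneg_left H2 hα0.le
        linarith [H1, H3, h12]
      exact le_of_mul_le_mul_left hsum hα0
    -- conclude
    have h2a : (0:ℝ) < 2 - α := by linarith
    have hx1 := norm_add_sq_real u ((2 - α) • (t - u))
    have hx2 : ⟪u, (2 - α) • (t - u)⟫ = (2 - α) * ⟪u, t - u⟫ :=
      real_inner_smul_right _ _ _
    have hx3 : ‖(2 - α) • (t - u)‖ ^ 2 = (2 - α) ^ 2 * ‖t - u‖ ^ 2 := by
      rw [norm_smul, mul_pow, Real.norm_eq_abs, sq_abs]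
    have hx4 : t = u + (t - u) := by abel
    have hx5 : ‖t‖ ^ 2 = ‖u‖ ^ 2 + 2 * ⟪u, t - u⟫ + ‖t - u‖ ^ 2 := by
      conv_lhs => rw [hx4]
      exact norm_add_sq_real u (t - u)
    have hx6 : ‖u - t‖ = ‖t - u‖ := norm_sub_rev _ _
    have hkey : 2 * ⟪u, t - u⟫ + (2 - α) * ‖t - u‖ ^ 2 ≤ 0 := by
      rw [hx6] at H
      linarith [H, hx5]
    have hsq : ‖u + (2 - α) • (t - u)‖ ^ 2 ≤ ‖u‖ ^ 2 := by
      have h13 := mul_le_mul_of_nonneg_left hkey h2a.le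
      rw [hx1, hx2, hx3]
      nlinarith [h13]
    nlinarith [hsq, norm_nonneg (u + (2 - α) • (t - u)), norm_nonneg u]
  refine ⟨fun x => x + (2 - α) • (Tδ x - x), ?_, ?_⟩
  · apply LipschitzWith.of_dist_le_mul
    intro x z
    rw [dist_eq_norm, dist_eq_norm, NNReal.coe_one, one_mul]
    have h1 : (x + (2 - α) • (Tδ x - x)) - (z + (2 - α) • (Tδ z - z))
        = (x - z) + (2 - α) • ((Tδ x - Tδ z) - (x - z)) := by module
    rw [h1]
    exact main x z
  · intro x
    have h1 : (1 - θ) • x + θ • x = x := by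
      rw [← add_smul]
      norm_num
    rw [smul_add, ← add_assoc, h1, smul_smul, hθα, one_smul]
    abel
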